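/- The map δ : L¹([0,1]) → ℝ given by δ(f) = ∫₀¹ |f| is Hadamard directionally differentiable at every f ∈ L¹, with directional derivative δ'_f(g) = ∫_{f=0} |g| + ∫_{f≠0} g · sgn(f). Moreover, if the set {f = 0} has Lebesgue measure zero, then δ'_f is linear: δ'_f(g) = ∫₀¹ g · sgn(f). -/

import Mathlib

open Set MeasureTheory Filter Topology

noncomputable section

/-- The underlying measure: Lebesgue measure restricted to `[0,1]`. -/
def μ01 : Measure ℝ := volume.restrict (Icc (0:ℝ) 1)

/-- The directional derivative of the `L¹` norm at `f` in direction `g`: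
`δ'_f(g) = ∫_{f=0} |g| + ∫_{f≠0} g · sgn(f)`. -/
def deltaDeriv (f g : Lp ℝ 1 μ01) : ℝ :=
  (∫ x in {x : ℝ | (f : ℝ → ℝ) x = 0}, |(g : ℝ → ℝ) x| ∂μ01) +
  (∫ x in {x : ℝ | (f : ℝ → ℝ) x ≠ 0},
    (g : ℝ → ℝ) x * Real.sign ((f : ℝ → ℝ) x) ∂μ01)

lemma measurable_realSign : Measurable Real.sign := by
  have : Real.sign = fun r : ℝ => if r < 0 then (-1:ℝ) else if 0 < r then 1 else 0 :=
    funext fun r => rfl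
  rw [this]
  exact Measurable.ite measurableSet_Iio measurable_const
    (Measurable.ite measurableSet_Ioi measurable_const measurable_const)

lemma tendsto_quot (f h : Lp ℝ 1 μ01) (tn : ℕ → ℝ) (htpos : ∀ n, 0 < tn n)
    (ht : Tendsto tn atTop (𝓝 0)) :
    Tendsto (fun n => (‖f + tn n • h‖ - ‖f‖) / tn n) atTop (𝓝 (deltaDeriv f h)) := by
  have hf : Integrable (f : ℝ → ℝ) μ01 := L1.integrable_coeFn f
  have hh : Integrable (h : ℝ → ℝ) μ01 := L1.integrable_coeFn h
  set F : ℕ → ℝ → ℝ := fun n x =>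
    (|(f : ℝ → ℝ) x + tn n * (h : ℝ → ℝ) x| - |(f : ℝ → ℝ) x|) / tn n with hF
  set L : ℝ → ℝ := fun x =>
    if (f : ℝ → ℝ) x = 0 then |(h : ℝ → ℝ) x|
    else (h : ℝ → ℝ) x * Real.sign ((f : ℝ → ℝ) x) with hL
  have hFint : ∀ n, Integrable (F n) μ01 := fun n =>
    (((hf.add (hh.const_mul (tn n))).abs.sub hf.abs).div_const (tn n))
  -- rewrite the quotient as ∫ F n
  have hquot : ∀ n, (‖f + tn n • h‖ - ‖f‖) / tn n = ∫ x, F n x ∂μ01 := by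
    intro n
    have h1 : ‖f + tn n • h‖ = ∫ x, |(f : ℝ → ℝ) x + tn n * (h : ℝ → ℝ) x| ∂μ01 := by
      rw [L1.norm_eq_integral_norm]
      refine integral_congr_ae ?_
      filter_upwards [Lp.coeFn_add f (tn n • h), Lp.coeFn_smul (tn n) h] with x hx1 hx2
      rw [hx1, Pi.add_apply, hx2, Pi.smul_apply, smul_eq_mul, Real.norm_eq_abs]
    have h2 : ‖f‖ = ∫ x, |(f : ℝ → ℝ) x| ∂μ01 := by
      rw [L1.norm_eq_integral_norm]; simp [Real.norm_eq_abs]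
    have hA : Integrable (fun x => |(f : ℝ → ℝ) x + tn n * (h : ℝ → ℝ) x|) μ01 :=
      (hf.add (hh.const_mul (tn n))).abs
    rw [h1, h2, ← integral_sub hA hf.abs, ← integral_div]
  have hLint : Tendsto (fun n => ∫ x, F n x ∂μ01) atTop (𝓝 (∫ x, L x ∂μ01)) := by
    refine tendsto_integral_of_dominated_convergence (fun x => |(h : ℝ → ℝ) x|)
      (fun n => (hFint n).1) hh.abs (fun n => ?_) ?_
    · refine Eventually.of_forall fun x => ?_
      have ht0 := htpos n
      rw [Real.norm_eq_abs, hF, abs_div, abs_of_pos ht0]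
      rw [div_le_iff₀ ht0]
      calc |(|(f : ℝ → ℝ) x + tn n * (h : ℝ → ℝ) x| - |(f : ℝ → ℝ) x|)|
          ≤ |(f : ℝ → ℝ) x + tn n * (h : ℝ → ℝ) x - (f : ℝ → ℝ) x| :=
            abs_abs_sub_abs_le_abs_sub _ _
        _ = tn n * |(h : ℝ → ℝ) x| := by
            rw [add_sub_cancel_left, abs_mul, abs_of_pos ht0]
        _ = |(h : ℝ → ℝ) x| * tn n := mul_comm _ _
    · refine Eventually.of_forall fun x => ?_
      by_cases hx : (f : ℝ → ℝ) x = 0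
      · have : (fun n => F n x) = fun _ => |(h : ℝ → ℝ) x| := by
          funext n
          rw [hF]
          simp only [hx, zero_add, abs_zero, sub_zero, abs_mul, abs_of_pos (htpos n)]
          exact mul_div_cancel_left₀ _ (ne_of_gt (htpos n))
        rw [this, hL]
        simp [hx]
      · have hε : 0 < |(f : ℝ → ℝ) x| / (|(h : ℝ → ℝ) x| + 1) := by positivity
        have hev : ∀ᶠ n in atTop, tn n < |(f : ℝ → ℝ) x| / (|(h : ℝ → ℝ) x| + 1) :=
          (tendsto_order.1 ht).2 _ hε
        have : (fun _ : ℕ => L x) =ᶠ[atTop] fun n => F n x := by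
          filter_upwards [hev] with n hn
          have ht0 := htpos n
          have hkey : tn n * |(h : ℝ → ℝ) x| < |(f : ℝ → ℝ) x| := by
            have h1 : tn n * (|(h : ℝ → ℝ) x| + 1) < |(f : ℝ → ℝ) x| :=
              (lt_div_iff₀ (by positivity)).1 hn
            nlinarith
          have hb1 : -|(h : ℝ → ℝ) x| ≤ (h : ℝ → ℝ) x := neg_abs_le _
          have hb2 : (h : ℝ → ℝ) x ≤ |(h : ℝ → ℝ) x| := le_abs_self _
          rcases lt_or_gt_of_ne hx with hneg | hpos
          · have habs : |(f : ℝ → ℝ) x| = -(f : ℝ → ℝ) x := abs_of_neg hneg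
            have hsum : (f : ℝ → ℝ) x + tn n * (h : ℝ → ℝ) x < 0 := by nlinarith
            show (if (f : ℝ → ℝ) x = 0 then |(h : ℝ → ℝ) x|
                else (h : ℝ → ℝ) x * Real.sign ((f : ℝ → ℝ) x)) =
              (|(f : ℝ → ℝ) x + tn n * (h : ℝ → ℝ) x| - |(f : ℝ → ℝ) x|) / tn n
            rw [if_neg hx]
            rw [Real.sign_of_neg hneg, abs_of_neg hsum, abs_of_neg hneg]
            field_simp
            ring
          · have habs : |(f : ℝ → ℝ) x| = (f : ℝ → ℝ) x := abs_of_pos hpos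
            have hsum : 0 < (f : ℝ → ℝ) x + tn n * (h : ℝ → ℝ) x := by nlinarith
            show (if (f : ℝ → ℝ) x = 0 then |(h : ℝ → ℝ) x|
                else (h : ℝ → ℝ) x * Real.sign ((f : ℝ → ℝ) x)) =
              (|(f : ℝ → ℝ) x + tn n * (h : ℝ → ℝ) x| - |(f : ℝ → ℝ) x|) / tn n
            rw [if_neg hx]
            rw [Real.sign_of_pos hpos, abs_of_pos hsum, abs_of_pos hpos]
            field_simp
            ring
        exact tendsto_const_nhds.congr' this
  have hset : MeasurableSet {x : ℝ | (f : ℝ → ℝ) x = 0} :=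
    (Lp.stronglyMeasurable f).measurable (measurableSet_singleton 0)
  have hLI : Integrable L μ01 := by
    refine hh.abs.mono ?_ (Eventually.of_forall fun x => ?_)
    · refine (Measurable.ite hset ((Lp.stronglyMeasurable h).measurable.abs)
        (((Lp.stronglyMeasurable h).measurable).mul
          (measurable_realSign.comp (Lp.stronglyMeasurable f).measurable))).aestronglyMeasurable
    · rw [hL]
      by_cases hx : (f : ℝ → ℝ) x = 0
      · simp [hx, Real.norm_eq_abs, abs_abs, le_abs_self]
      · simp only [if_neg hx, Real.norm_eq_abs, abs_mul]
        calc |(h : ℝ → ℝ) x| * |Real.sign ((f : ℝ → ℝ) x)|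
            ≤ |(h : ℝ → ℝ) x| * 1 := by
              refine mul_le_mul_of_nonneg_left ?_ (abs_nonneg _)
              rcases Real.sign_apply_eq ((f : ℝ → ℝ) x) with h' | h' | h' <;> simp [h']
          _ = |(h : ℝ → ℝ) x| := mul_one _
        exact le_abs_self _
  have hLeq : ∫ x, L x ∂μ01 = deltaDeriv f h := by
    rw [← integral_add_compl hset hLI, deltaDeriv]
    congr 1
    · refine setIntegral_congr_fun hset fun x hx => ?_
      rw [hL]; exact if_pos hx
    · refine setIntegral_congr_fun hset.compl fun x hx => ?_
      rw [hL]; exact if_neg hx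
  rw [← hLeq]
  simpa only [← hquot] using hLint

/-- The map `δ(f) = ∫₀¹ |f| = ‖f‖_{L¹}` is Hadamard directionally
differentiable at every `f ∈ L¹([0,1])` with derivative `δ'_f` as above;
moreover, if `{f = 0}` has measure zero then `δ'_f` is linear and
`δ'_f(g) = ∫₀¹ g · sgn(f)`. -/
theorem l1norm_hadamard_directional_diff (f : Lp ℝ 1 μ01) :
    (∀ (h : Lp ℝ 1 μ01) (hn : ℕ → Lp ℝ 1 μ01) (tn : ℕ → ℝ),
      (∀ n, 0 < tn n) → Tendsto tn atTop (𝓝 0) → Tendsto hn atTop (𝓝 h) →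
      Tendsto (fun n => (‖f + tn n • hn n‖ - ‖f‖) / tn n) atTop
        (𝓝 (deltaDeriv f h))) ∧
    (μ01 {x : ℝ | (f : ℝ → ℝ) x = 0} = 0 →
      IsLinearMap ℝ (deltaDeriv f) ∧
      ∀ g : Lp ℝ 1 μ01,
        deltaDeriv f g =
          ∫ x, (g : ℝ → ℝ) x * Real.sign ((f : ℝ → ℝ) x) ∂μ01) := by
  constructor
  · intro h hn tn htpos ht hhn
    have key := tendsto_quot f h tn htpos ht
    have hdiff : Tendsto (fun n => (‖f + tn n • hn n‖ - ‖f‖) / tn n -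
        (‖f + tn n • h‖ - ‖f‖) / tn n) atTop (𝓝 0) := by
      have hnorm : Tendsto (fun n => ‖hn n - h‖) atTop (𝓝 0) :=
        (tendsto_iff_norm_sub_tendsto_zero).1 hhn
      refine squeeze_zero_norm (fun n => ?_) hnorm
      have heq : (‖f + tn n • hn n‖ - ‖f‖) / tn n - (‖f + tn n • h‖ - ‖f‖) / tn n =
          (‖f + tn n • hn n‖ - ‖f + tn n • h‖) / tn n := by ring
      rw [heq, Real.norm_eq_abs, abs_div, abs_of_pos (htpos n), div_le_iff₀ (htpos n)]
      calc |‖f + tn n • hn n‖ - ‖f + tn n • h‖|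
          ≤ ‖(f + tn n • hn n) - (f + tn n • h)‖ := abs_norm_sub_norm_le _ _
        _ = ‖tn n • (hn n - h)‖ := by rw [add_sub_add_left_eq_sub, smul_sub]
        _ = ‖hn n - h‖ * tn n := by
            rw [norm_smul, Real.norm_eq_abs, abs_of_pos (htpos n), mul_comm]
    have := key.add hdiff
    rw [add_zero] at this
    refine this.congr fun n => by ring
  · intro hnull
    have hfm := (Lp.stronglyMeasurable f).measurable
    have hint : ∀ g : Lp ℝ 1 μ01,
        Integrable (fun x => (g : ℝ → ℝ) x * Real.sign ((f : ℝ → ℝ) x)) μ01 := by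
      intro g
      refine (L1.integrable_coeFn g).abs.mono
        (((Lp.stronglyMeasurable g).measurable.mul
          (measurable_realSign.comp hfm)).aestronglyMeasurable)
        (Eventually.of_forall fun x => ?_)
      rw [Real.norm_eq_abs, Real.norm_eq_abs, abs_abs, abs_mul]
      calc |(g : ℝ → ℝ) x| * |Real.sign ((f : ℝ → ℝ) x)|
          ≤ |(g : ℝ → ℝ) x| * 1 := by
            refine mul_le_mul_of_nonneg_left ?_ (abs_nonneg _)
            rcases Real.sign_apply_eq ((f : ℝ → ℝ) x) with h' | h' | h' <;> simp [h']
        _ = |(g : ℝ → ℝ) x| := mul_one _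
    have hrestr : μ01.restrict {x : ℝ | (f : ℝ → ℝ) x ≠ 0} = μ01 := by
      have huniv : {x : ℝ | (f : ℝ → ℝ) x ≠ 0} =ᵐ[μ01] (univ : Set ℝ) := by
        rw [ae_eq_univ]
        have : {x : ℝ | (f : ℝ → ℝ) x ≠ 0}ᶜ = {x : ℝ | (f : ℝ → ℝ) x = 0} := by
          ext x; simp
        rw [this]; exact hnull
      rw [Measure.restrict_congr_set huniv, Measure.restrict_univ]
    have hform : ∀ g : Lp ℝ 1 μ01, deltaDeriv f g =
        ∫ x, (g : ℝ → ℝ) x * Real.sign ((f : ℝ → ℝ) x) ∂μ01 := by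
      intro g
      rw [deltaDeriv, Measure.restrict_eq_zero.mpr hnull, integral_zero_measure, zero_add, hrestr]
    refine ⟨⟨fun g₁ g₂ => ?_, fun c g => ?_⟩, hform⟩
    · rw [hform, hform, hform]
      have : ∫ x, ((g₁ + g₂ : Lp ℝ 1 μ01) : ℝ → ℝ) x * Real.sign ((f : ℝ → ℝ) x) ∂μ01 =
          ∫ x, ((g₁ : ℝ → ℝ) x * Real.sign ((f : ℝ → ℝ) x) +
            (g₂ : ℝ → ℝ) x * Real.sign ((f : ℝ → ℝ) x)) ∂μ01 := by
        refine integral_congr_ae ?_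
        filter_upwards [Lp.coeFn_add g₁ g₂] with x hx
        rw [hx, Pi.add_apply]; ring
      rw [this, integral_add (hint g₁) (hint g₂)]
    · rw [hform, hform]
      have : ∫ x, ((c • g : Lp ℝ 1 μ01) : ℝ → ℝ) x * Real.sign ((f : ℝ → ℝ) x) ∂μ01 =
          ∫ x, c * ((g : ℝ → ℝ) x * Real.sign ((f : ℝ → ℝ) x)) ∂μ01 := by
        refine integral_congr_ae ?_
        filter_upwards [Lp.coeFn_smul c g] with x hx
        rw [hx, Pi.smul_apply, smul_eq_mul]; ring
      rw [this, integral_const_mul, smul_eq_mul]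

end
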